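/- Suppose A and A' are C*-subalgebras of B(ℓ²) both containing K(ℓ²) (the compact operators). Then every *-isomorphism Φ : A → A' is implemented by a unitary: there is a unitary U ∈ B(ℓ²) such that Φ(A) = U*AU for all A ∈ A. -/

import Mathlib

set_option linter.unusedSectionVars false
set_option maxHeartbeats 4000000
set_option synthInstance.maxHeartbeats 1000000

open ContinuousLinearMap
local notation "⟪" x ", " y "⟫" => @inner ℂ _ _ x y

section Aux
variable {H : Type*} [NormedAddCommGroup H] [InnerProductSpace ℂ H]

noncomputable def rk (x y : H) : H →L[ℂ] H :=
  (toSpanSingleton ℂ x).comp (innerSL ℂ y)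

lemma rk_apply (x y z : H) : rk x y z = ⟪y, z⟫ • x := rfl

lemma rk_compact (x y : H) : IsCompactOperator (rk x y) := by
  have h1 : IsCompactOperator (toSpanSingleton ℂ x) := by
    refine ⟨(fun c : ℂ => c • x) '' Metric.closedBall (0:ℂ) 1, ?_, ?_⟩
    · exact ((isCompact_closedBall (0:ℂ) 1).image (continuous_id.smul continuous_const))
    · refine Filter.mem_of_superset (Metric.closedBall_mem_nhds (0:ℂ) one_pos) ?_
      intro c hc
      exact Set.mem_preimage.mpr ⟨c, hc, rfl⟩
  exact h1.comp_clm (innerSL ℂ y)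

variable [CompleteSpace H]

lemma star_rk (x y : H) : star (rk x y) = rk y x := by
  rw [star_eq_adjoint]
  ext z
  refine ext_inner_left ℂ fun v => ?_
  rw [adjoint_inner_right, rk_apply, rk_apply, inner_smul_left, inner_smul_right,
    inner_conj_symm]
  ring

lemma comp_rk (T : H →L[ℂ] H) (x y : H) : T * rk x y = rk (T x) y := by
  ext z; simp [rk_apply, mul_apply]

lemma rk_comp_rk (x y a b : H) : rk x y * rk a b = ⟪y, a⟫ • rk x b := by
  ext z; simp [rk_apply, mul_apply, inner_smul_right, smul_smul, mul_comm]

lemma rk_conj (x : H) (S : H →L[ℂ] H) :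
    rk x x * S * rk x x = ⟪x, S x⟫ • rk x x := by
  ext z
  simp [rk_apply, mul_apply, inner_smul_right, smul_smul, mul_comm]

end Aux

/-- a *-isomorphism between C*-subalgebras of `B(ℓ²)` both containing the
compact operators is implemented by a unitary of `B(ℓ²)`. -/
theorem stmt3 {H : Type*} [NormedAddCommGroup H] [InnerProductSpace ℂ H] [CompleteSpace H]
    [TopologicalSpace.SeparableSpace H] (hinf : ¬ FiniteDimensional ℂ H)
    (A A' : NonUnitalStarSubalgebra ℂ (H →L[ℂ] H))
    (hAclosed : IsClosed (A : Set (H →L[ℂ] H)))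
    (hA'closed : IsClosed (A' : Set (H →L[ℂ] H)))
    (hKA : ∀ T : H →L[ℂ] H, IsCompactOperator T → T ∈ A)
    (hKA' : ∀ T : H →L[ℂ] H, IsCompactOperator T → T ∈ A')
    (Φ : A ≃⋆ₐ[ℂ] A') :
    ∃ U : H →L[ℂ] H, U ∈ unitary (H →L[ℂ] H) ∧
      ∀ a : A, (Φ a : H →L[ℂ] H) = star U * (a : H →L[ℂ] H) * U := by
  -- get a unit vector ξ
  have hnt : Nontrivial H := by
    by_contra h
    rw [not_nontrivial_iff_subsingleton] at h
    exact hinf inferInstance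
  obtain ⟨v, hv⟩ := exists_ne (0 : H)
  set ξ : H := ‖v‖⁻¹ • v with hξdef
  have hξ : ‖ξ‖ = 1 := norm_smul_inv_norm hv
  have hξ0 : ξ ≠ 0 := by
    intro h; rw [h, norm_zero] at hξ; exact zero_ne_one hξ
  have hξi : ⟪ξ, ξ⟫ = 1 := by
    rw [inner_self_eq_norm_sq_to_K, hξ]; simp
  -- the rank one projection p and its image q
  set p : H →L[ℂ] H := rk ξ ξ with hpdef
  set P : A := ⟨p, hKA p (rk_compact ξ ξ)⟩ with hPdef
  set Q : A' := Φ P with hQdef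
  set q : H →L[ℂ] H := (Q : H →L[ℂ] H) with hqdef
  have hpp : p * p = p := by rw [hpdef, rk_comp_rk, hξi, one_smul]
  have hPP : P * P = P := Subtype.ext hpp
  have hqq : q * q = q := by
    have := map_mul Φ P P
    rw [hPP] at this
    exact congrArg Subtype.val this.symm
  have hstarp : star p = p := star_rk ξ ξ
  have hstarP : star P = P := Subtype.ext hstarp
  have hstarq : star q = q := by
    have := map_star Φ P
    rw [hstarP] at this
    exact (congrArg Subtype.val this).symm
  -- minimality transfers: q b q ∈ ℂ q
  have key : ∀ b : A', (b : H →L[ℂ] H) ∈ A' →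
      q * (b : H →L[ℂ] H) * q
        = ⟪ξ, ((Φ.symm b : A) : H →L[ℂ] H) ξ⟫ • q := by
    intro b _
    have h1 : P * Φ.symm b * P = ⟪ξ, ((Φ.symm b : A) : H →L[ℂ] H) ξ⟫ • P :=
      Subtype.ext (rk_conj ξ _)
    have h2 := congrArg Subtype.val (congrArg Φ h1)
    simpa [map_mul, map_smul, StarAlgEquiv.apply_symm_apply] using h2
  -- q ≠ 0
  have hq0 : q ≠ 0 := by
    intro h
    have hP0 : P = 0 := by
      apply Φ.injective
      rw [map_zero]
      exact Subtype.ext h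
    have := congrArg Subtype.val hP0
    have hpξ : p ξ = ξ := by rw [hpdef, rk_apply, hξi, one_smul]
    rw [show (P : H →L[ℂ] H) = p from rfl] at this
    rw [this] at hpξ
    exact hξ0 (by simpa using hpξ.symm)
  -- find a unit vector η with q η = η
  obtain ⟨w, hw⟩ : ∃ w, q w ≠ 0 := by
    by_contra h
    push_neg at h
    exact hq0 (by ext z; simp [h])
  set η : H := ‖q w‖⁻¹ • q w with hηdef
  have hqη : q η = η := by
    have : q (q w) = q w := by
      have := congrArg (fun T => T w) hqq
      simpa [mul_apply] using this
    rw [hηdef, ContinuousLinearMap.map_smul_of_tower, this]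
  have hη : ‖η‖ = 1 := norm_smul_inv_norm hw
  have hη0 : η ≠ 0 := by
    intro h; rw [h, norm_zero] at hη; exact zero_ne_one hη
  have hηi : ⟪η, η⟫ = 1 := by
    rw [inner_self_eq_norm_sq_to_K, hη]; simp
  -- q = rk η η
  have hq_eq : q = rk η η := by
    have hb := key ⟨rk η η, hKA' _ (rk_compact η η)⟩ (hKA' _ (rk_compact η η))
    set c : ℂ := ⟪ξ, ((Φ.symm ⟨rk η η, hKA' _ (rk_compact η η)⟩ : A) : H →L[ℂ] H) ξ⟫ with hc
    have hpt : ∀ z, c • q z = ⟪η, q z⟫ • η := by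
      intro z
      have := congrArg (fun T => T z) hb
      simp only [ContinuousLinearMap.mul_apply, smul_apply] at this
      rw [← this, rk_apply, map_smul, hqη]
    have hc1 : c = 1 := by
      have h1 := hpt η
      rw [hqη, hηi, one_smul] at h1
      have : (c - 1) • η = 0 := by rw [sub_smul, one_smul, h1, sub_self]
      exact sub_eq_zero.mp ((smul_eq_zero.mp this).resolve_right hη0)
    ext z
    have h2 := hpt z
    rw [hc1, one_smul] at h2
    have h3 : ⟪η, q z⟫ = ⟪η, z⟫ := by
      have hadj : ContinuousLinearMap.adjoint q = q := by
        rw [← ContinuousLinearMap.star_eq_adjoint]; exact hstarq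
      calc ⟪η, q z⟫ = ⟪η, (ContinuousLinearMap.adjoint q) z⟫ := by rw [hadj]
        _ = ⟪q η, z⟫ := ContinuousLinearMap.adjoint_inner_right q η z
        _ = ⟪η, z⟫ := by rw [hqη]
    rw [h2, h3, rk_apply]
  -- the map E : x ↦ rank-one operator x ⊗ ξ, as an element of A
  set E : H → A := fun x => ⟨rk x ξ, hKA _ (rk_compact x ξ)⟩ with hEdef
  -- define U
  set Ulin : H →ₗ[ℂ] H :=
    { toFun := fun x => (Φ (E x) : H →L[ℂ] H) η
      map_add' := by
        intro x y
        have hE : E (x + y) = E x + E y := by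
          apply Subtype.ext
          ext z
          show rk (x+y) ξ z = (rk x ξ + rk y ξ) z
          simp [rk_apply, smul_add]
        show (Φ (E (x + y)) : H →L[ℂ] H) η = (Φ (E x) : H →L[ℂ] H) η + (Φ (E y) : H →L[ℂ] H) η
        rw [hE, map_add]
        rfl
      map_smul' := by
        intro cc x
        have hE : E (cc • x) = cc • E x := by
          apply Subtype.ext
          ext z
          show rk (cc • x) ξ z = (cc • rk x ξ) z
          simp [rk_apply, smul_smul, mul_comm]
        show (Φ (E (cc • x)) : H →L[ℂ] H) η = cc • (Φ (E x) : H →L[ℂ] H) η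
        rw [hE, map_smul Φ cc (E x)]
        rw [SetLike.val_smul, ContinuousLinearMap.smul_apply] } with hUlin
  have hUinner : ∀ x y, ⟪Ulin x, Ulin y⟫ = ⟪x, y⟫ := by
    intro x y
    have hstarE : star (E x) * E y = ⟪x, y⟫ • P := by
      apply Subtype.ext
      show star (rk x ξ) * rk y ξ = ⟪x, y⟫ • p
      rw [star_rk, rk_comp_rk]
    have h4 : (star (Φ (E x)) * Φ (E y) : H →L[ℂ] H) = ⟪x, y⟫ • q := by
      have := congrArg Subtype.val (congrArg Φ hstarE)
      simpa [map_mul, map_star, map_smul] using this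
    have h5 : ⟪Ulin x, Ulin y⟫
        = ⟪η, (star (Φ (E x)) * Φ (E y) : H →L[ℂ] H) η⟫ := by
      show ⟪(Φ (E x) : H →L[ℂ] H) η, (Φ (E y) : H →L[ℂ] H) η⟫ = _
      rw [ContinuousLinearMap.mul_apply, StarMemClass.coe_star,
        ContinuousLinearMap.star_eq_adjoint, ContinuousLinearMap.adjoint_inner_right]
    rw [h5, h4]
    simp [hqη, inner_smul_right, hηi, hη]
  set U : H →L[ℂ] H := (Ulin.isometryOfInner hUinner).toContinuousLinearMap with hUdef
  have hUx : ∀ x, U x = (Φ (E x) : H →L[ℂ] H) η := fun _ => rfl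
  have hUi : ∀ x y, ⟪U x, U y⟫ = ⟪x, y⟫ := hUinner
  -- commutation relation
  have hcomm : ∀ T : A, (Φ T : H →L[ℂ] H) * U = U * (T : H →L[ℂ] H) := by
    intro T
    ext x
    have hTE : T * E x = E ((T : H →L[ℂ] H) x) := by
      apply Subtype.ext
      show (T : H →L[ℂ] H) * rk x ξ = rk ((T : H →L[ℂ] H) x) ξ
      exact comp_rk _ x ξ
    show (Φ T : H →L[ℂ] H) (U x) = U ((T : H →L[ℂ] H) x)
    rw [hUx, hUx, ← ContinuousLinearMap.mul_apply]
    congr 1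
    have h10 : Φ T * Φ (E x) = Φ (E ((T : H →L[ℂ] H) x)) := by rw [← map_mul, hTE]
    rw [← MulMemClass.coe_mul, h10]
  -- surjectivity of U
  have hsurj : Function.Surjective U := by
    intro y
    set b : A' := ⟨rk y η, hKA' _ (rk_compact y η)⟩ with hbdef
    set S : H →L[ℂ] H := ((Φ.symm b : A) : H →L[ℂ] H) with hSdef
    refine ⟨S ξ, ?_⟩
    have hE : E (S ξ) = Φ.symm b * P := by
      apply Subtype.ext
      show rk (S ξ) ξ = S * p
      rw [comp_rk]
    have h6 : (Φ (E (S ξ)) : H →L[ℂ] H) = rk y η * q := by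
      have := congrArg Subtype.val (congrArg Φ hE)
      simpa [map_mul, StarAlgEquiv.apply_symm_apply] using this
    rw [hUx, h6, hq_eq, rk_comp_rk]
    rw [ContinuousLinearMap.smul_apply, rk_apply, hηi]
    simp
  -- U is unitary
  have hstarUU : star U * U = 1 := by
    ext x
    refine ext_inner_left ℂ fun v => ?_
    show ⟪v, (star U) (U x)⟫ = ⟪v, (1 : H →L[ℂ] H) x⟫
    rw [ContinuousLinearMap.star_eq_adjoint, ContinuousLinearMap.adjoint_inner_right]
    simpa using hUi v x
  have hUUstar : U * star U = 1 := by
    ext y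
    obtain ⟨x, rfl⟩ := hsurj y
    have h7 : (star U) (U x) = x := by
      have := congrArg (fun T => T x) hstarUU
      simpa [ContinuousLinearMap.mul_apply] using this
    show U ((star U) (U x)) = (1 : H →L[ℂ] H) (U x)
    rw [h7]
    rfl
  refine ⟨star U, ?_, ?_⟩
  · rw [Unitary.mem_iff, star_star]
    exact ⟨hUUstar, hstarUU⟩
  · intro a
    rw [star_star]
    have h8 := hcomm a
    calc (Φ a : H →L[ℂ] H) = (Φ a : H →L[ℂ] H) * (U * star U) := by rw [hUUstar, mul_one]
      _ = ((Φ a : H →L[ℂ] H) * U) * star U := by rw [mul_assoc]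
      _ = (U * (a : H →L[ℂ] H)) * star U := by rw [h8]
      _ = U * (a : H →L[ℂ] H) * star U := rfl
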